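/- Let G be a digraph, P a piece of G with boundary ∂P such that all paths of G entering or exiting V(P)\∂P go through ∂P. An SCC S of P that contains no boundary vertex (S ∩ ∂P = ∅) fails to be an SCC of G if and only if there exists an SCC S' of G with S ⊆ S' and S' ∩ ∂P ≠ ∅; equivalently, iff S ⊆ Π_P(S' ∩ ∂P) for that SCC S' of G. -/

import Mathlib

/-- An SCC `S` of a piece `P` containing no boundary vertex fails
to be an SCC of `G` iff there is an SCC `S'` of `G` with `S ⊆ S'`,
`S' ∩ bP ≠ ∅`, and `S ⊆ Π_P(S' ∩ bP)`. -/
theorem stmt9 {V : Type*} (E EP : V → V → Prop) (VP bP : Set V)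
    (hbP : bP ⊆ VP)
    (hEP : ∀ u v, EP u v → E u v ∧ u ∈ VP ∧ v ∈ VP)
    (hclosed : ∀ u v, E u v → (u ∈ VP \ bP ∨ v ∈ VP \ bP) → EP u v)
    (S : Set V)
    (hS : ∃ r ∈ VP, S = {w | Relation.ReflTransGen EP r w ∧ Relation.ReflTransGen EP w r})
    (hSb : S ∩ bP = ∅) :
    (¬ ∃ r, S = {w | Relation.ReflTransGen E r w ∧ Relation.ReflTransGen E w r}) ↔
    ∃ S' : Set V,
      (∃ r, S' = {w | Relation.ReflTransGen E r w ∧ Relation.ReflTransGen E w r}) ∧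
      S ⊆ S' ∧ (S' ∩ bP).Nonempty ∧
      S ⊆ {v | v ∈ VP ∧ (∃ a ∈ S' ∩ bP, Relation.ReflTransGen EP a v) ∧
            (∃ c ∈ S' ∩ bP, Relation.ReflTransGen EP v c)} := by
  obtain ⟨r, hrVP, hSdef⟩ := hS
  have hrS : r ∈ S := by rw [hSdef]; exact ⟨Relation.ReflTransGen.refl, Relation.ReflTransGen.refl⟩
  have hrb : r ∉ bP := fun h => Set.eq_empty_iff_forall_notMem.1 hSb r ⟨hrS, h⟩
  have hEPE : ∀ {u v}, Relation.ReflTransGen EP u v → Relation.ReflTransGen E u v :=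
    fun h => Relation.ReflTransGen.mono (fun a b hab => (hEP a b hab).1) _ _ h
  have hVP : ∀ {u v}, u ∈ VP → Relation.ReflTransGen EP u v → v ∈ VP := by
    intro u v hu h
    induction h with
    | refl => exact hu
    | tail _ hbc _ => exact (hEP _ _ hbc).2.2
  -- forward decomposition of an E-path starting in VP \ bP
  have hfwd : ∀ {u x}, Relation.ReflTransGen E u x → u ∈ VP → u ∉ bP →
      Relation.ReflTransGen EP u x ∨
        ∃ b ∈ bP, Relation.ReflTransGen EP u b ∧ Relation.ReflTransGen E b x := by
    intro u x h hu hub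
    induction h with
    | refl => exact Or.inl Relation.ReflTransGen.refl
    | @tail y x _ hyx ih =>
      rcases ih with h1 | ⟨b, hb, h1, h2⟩
      · have hyVP : y ∈ VP := hVP hu h1
        by_cases hyb : y ∈ bP
        · exact Or.inr ⟨y, hyb, h1, Relation.ReflTransGen.single hyx⟩
        · exact Or.inl (h1.tail (hclosed _ _ hyx (Or.inl ⟨hyVP, hyb⟩)))
      · exact Or.inr ⟨b, hb, h1, h2.tail hyx⟩
  -- backward decomposition of an E-path ending in VP \ bP
  have hbwd : ∀ {x u}, Relation.ReflTransGen E x u → u ∈ VP → u ∉ bP →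
      Relation.ReflTransGen EP x u ∨
        ∃ b ∈ bP, Relation.ReflTransGen E x b ∧ Relation.ReflTransGen EP b u := by
    intro x u h hu hub
    induction h using Relation.ReflTransGen.head_induction_on with
    | refl => exact Or.inl Relation.ReflTransGen.refl
    | @head x y hxy hyu ih =>
      rcases ih with h1 | ⟨b, hb, h1, h2⟩
      · have hyVP : y ∈ VP := by
          rcases h1.cases_head with rfl | ⟨z, hz, _⟩
          · exact hu
          · exact (hEP _ _ hz).2.1
        by_cases hyb : y ∈ bP
        · exact Or.inr ⟨y, hyb, Relation.ReflTransGen.single hxy, h1⟩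
        · exact Or.inl (Relation.ReflTransGen.head (hclosed _ _ hxy (Or.inr ⟨hyVP, hyb⟩)) h1)
      · exact Or.inr ⟨b, hb, Relation.ReflTransGen.head hxy h1, h2⟩
  constructor
  · intro hnot
    set S' : Set V :=
      {w | Relation.ReflTransGen E r w ∧ Relation.ReflTransGen E w r} with hS'def
    have hsub : S ⊆ S' := by
      intro v hv
      rw [hSdef] at hv
      exact ⟨hEPE hv.1, hEPE hv.2⟩
    have hne : S ≠ S' := fun he => hnot ⟨r, he⟩
    obtain ⟨w, hwS', hwS⟩ := Set.exists_of_ssubset (hsub.ssubset_of_ne hne)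
    obtain ⟨hrw, hwr⟩ := hwS'
    -- find a boundary vertex in S'
    have hbdry : ∃ b, b ∈ S' ∧ b ∈ bP := by
      rcases hfwd hrw hrVP hrb with h1 | ⟨b, hb, h1, h2⟩
      · rcases hbwd hwr hrVP hrb with h2 | ⟨b, hb, h3, h4⟩
        · exact absurd (by rw [hSdef]; exact ⟨h1, h2⟩) hwS
        · exact ⟨b, ⟨hrw.trans h3, hEPE h4⟩, hb⟩
      · exact ⟨b, ⟨hEPE h1, h2.trans hwr⟩, hb⟩
    obtain ⟨b, hbS', hbbP⟩ := hbdry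
    refine ⟨S', ⟨r, rfl⟩, hsub, ⟨b, hbS', hbbP⟩, ?_⟩
    intro v hv
    have hv' := hv
    rw [hSdef] at hv'
    obtain ⟨hrv, hvr⟩ := hv'
    refine ⟨hVP hrVP hrv, ?_, ?_⟩
    · -- entrance
      rcases hbwd hbS'.2 hrVP hrb with h1 | ⟨c, hc, h3, h4⟩
      · exact ⟨b, ⟨hbS', hbbP⟩, h1.trans hrv⟩
      · exact ⟨c, ⟨⟨hbS'.1.trans h3, hEPE h4⟩, hc⟩, h4.trans hrv⟩
    · -- exit
      rcases hfwd hbS'.1 hrVP hrb with h1 | ⟨c, hc, h3, h4⟩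
      · exact ⟨b, ⟨hbS', hbbP⟩, hvr.trans h1⟩
      · exact ⟨c, ⟨⟨hEPE h3, h4.trans hbS'.2⟩, hc⟩, hvr.trans h3⟩
  · rintro ⟨S', ⟨r', rfl⟩, hsub, ⟨b, hbS', hbbP⟩, -⟩ ⟨r'', hSe⟩
    have hrS' := hsub hrS
    have hrS'' : r ∈ {w | Relation.ReflTransGen E r'' w ∧ Relation.ReflTransGen E w r''} := by
      rw [← hSe]; exact hrS
    have hbS : b ∈ S := by
      rw [hSe]
      exact ⟨hrS''.1.trans (hrS'.2.trans hbS'.1), (hbS'.2.trans hrS'.1).trans hrS''.2⟩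
    exact Set.eq_empty_iff_forall_notMem.1 hSb b ⟨hbS, hbbP⟩
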